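/- arXiv:2404.05707 — 5 statements merged into one kernel-verified Lean document; each statement's English description precedes it below -/
import Mathlib

section
/- Let m ≥ 2, let 1 ≤ j ≤ m−1 and 1 ≤ l ≤ m−j, and let S = {e_j − e_k : j < k ≤ m} ∪ {e_j} ∪ {e_j + e_k : m−l+1 ≤ k ≤ m} ⊆ ℤ^m. Then the set R⁺ ∖ S is closed: for all α, β ∈ R⁺ ∖ S and all natural numbers a, b such that aα + bβ ∈ R, one has aα + bβ ∈ R⁺ ∖ S. -/
/- STATEMENT 0: Closedness of R⁺ ∖ S in type B_m.
   We model ℤ^m as functions ℕ → ℤ with standard basis vectors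
   `e i := Pi.single i 1` for `1 ≤ i ≤ m`. -/

namespace Stmt0

/-- The `i`-th standard basis vector of ℤ^m (1-indexed). -/
noncomputable def e (i : ℕ) : ℕ → ℤ := Pi.single i 1

/-- The positive roots of the type `B_m` root system:
`R⁺ = {e_i − e_k : i < k} ∪ {e_i + e_k : i < k} ∪ {e_i : 1 ≤ i ≤ m}`. -/
noncomputable def Rpos (m : ℕ) : Set (ℕ → ℤ) :=
  {v | ∃ i k, 1 ≤ i ∧ i < k ∧ k ≤ m ∧ (v = e i - e k ∨ v = e i + e k)} ∪
  {v | ∃ i, 1 ≤ i ∧ i ≤ m ∧ v = e i}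

/-- The full type `B_m` root system `R = {±e_i ± e_k : i < k} ∪ {±e_i}`. -/
noncomputable def Rall (m : ℕ) : Set (ℕ → ℤ) :=
  Rpos m ∪ {v | ∃ w ∈ Rpos m, v = -w}

/-- The set `S = {e_j − e_k : j < k ≤ m} ∪ {e_j} ∪ {e_j + e_k : m−l+1 ≤ k ≤ m}`. -/
noncomputable def S (m j l : ℕ) : Set (ℕ → ℤ) :=
  {v | ∃ k, j < k ∧ k ≤ m ∧ v = e j - e k} ∪ {e j} ∪
  {v | ∃ k, m - l + 1 ≤ k ∧ k ≤ m ∧ v = e j + e k}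

/-! ### Auxiliary linear functionals -/

/-- A generic linear functional `v ↦ ∑ i in s, c i * v i`. -/
noncomputable def L (s : Finset ℕ) (c : ℕ → ℤ) (v : ℕ → ℤ) : ℤ := ∑ i ∈ s, c i * v i

/-- `ψ v = ∑_{i=m-l+1}^{m} v i`. -/
noncomputable def psi (m l : ℕ) (v : ℕ → ℤ) : ℤ := L (Finset.Icc (m-l+1) m) (fun _ => 1) v

/-- `σ v = ∑_{i=1}^{m} v i`. -/
noncomputable def sig (m : ℕ) (v : ℕ → ℤ) : ℤ := L (Finset.Icc 1 m) (fun _ => 1) v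

/-- The height-like functional `f v = ∑_{i=1}^m (m+1-i) * v i`. -/
noncomputable def ht (m : ℕ) (v : ℕ → ℤ) : ℤ := L (Finset.Icc 1 m) (fun i => (m : ℤ) + 1 - i) v

/-- The possible triples `(v j, ψ v, σ v)` for `v ∈ R⁺ ∖ S`. -/
def T3 (x y z : ℤ) : Prop :=
  (x = 0 ∧ y = -1 ∧ z = 0) ∨ (x = 0 ∧ y = 0 ∧ z = 0) ∨ (x = -1 ∧ y = 0 ∧ z = 0) ∨
  (x = 1 ∧ y = 0 ∧ z = 2) ∨ (x = 0 ∧ y = 0 ∧ z = 2) ∨ (x = 0 ∧ y = 1 ∧ z = 2) ∨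
  (x = 0 ∧ y = 2 ∧ z = 2) ∨ (x = 0 ∧ y = 0 ∧ z = 1) ∨ (x = 0 ∧ y = 1 ∧ z = 1)

lemma e_apply (i x : ℕ) : e i x = if x = i then 1 else 0 := by
  simp [e, Pi.single_apply]

lemma L_e (s : Finset ℕ) (c : ℕ → ℤ) (i : ℕ) :
    L s c (e i) = if i ∈ s then c i else 0 := by
  unfold L
  rw [← Finset.sum_ite_eq' s i c]
  refine Finset.sum_congr rfl fun x _ => ?_
  rw [e_apply]
  split_ifs <;> simp_all

lemma L_sub (s : Finset ℕ) (c : ℕ → ℤ) (v w : ℕ → ℤ) :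
    L s c (v - w) = L s c v - L s c w := by
  unfold L
  rw [← Finset.sum_sub_distrib]
  refine Finset.sum_congr rfl fun x _ => ?_
  simp [mul_sub]

lemma L_add (s : Finset ℕ) (c : ℕ → ℤ) (v w : ℕ → ℤ) :
    L s c (v + w) = L s c v + L s c w := by
  unfold L
  rw [← Finset.sum_add_distrib]
  refine Finset.sum_congr rfl fun x _ => ?_
  simp [mul_add]

lemma L_neg (s : Finset ℕ) (c : ℕ → ℤ) (v : ℕ → ℤ) :
    L s c (-v) = - L s c v := by
  unfold L
  rw [← Finset.sum_neg_distrib]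
  refine Finset.sum_congr rfl fun x _ => ?_
  simp

lemma L_comb (s : Finset ℕ) (c : ℕ → ℤ) (a b : ℕ) (v w : ℕ → ℤ) :
    L s c (a • v + b • w) = a * L s c v + b * L s c w := by
  unfold L
  rw [Finset.mul_sum, Finset.mul_sum, ← Finset.sum_add_distrib]
  refine Finset.sum_congr rfl fun x _ => ?_
  simp only [Pi.add_apply, Pi.smul_apply, nsmul_eq_mul, Pi.mul_apply, Pi.natCast_apply]
  ring

lemma L_Icc_e (a b i : ℕ) :
    L (Finset.Icc a b) (fun _ => 1) (e i) = if a ≤ i ∧ i ≤ b then 1 else 0 := by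
  rw [L_e]; simp [Finset.mem_Icc]

lemma coord_comb (a b : ℕ) (v w : ℕ → ℤ) (x : ℕ) :
    (a • v + b • w) x = a * v x + b * w x := by
  simp only [Pi.add_apply, Pi.smul_apply, nsmul_eq_mul, Pi.mul_apply, Pi.natCast_apply]

/-! ### Values of the functionals on roots -/

lemma psi_minus (m l p q : ℕ) :
    psi m l (e p - e q) =
      (if m-l+1 ≤ p ∧ p ≤ m then 1 else 0) - (if m-l+1 ≤ q ∧ q ≤ m then 1 else 0) := by
  rw [psi, L_sub, L_Icc_e, L_Icc_e]

lemma psi_plus (m l p q : ℕ) :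
    psi m l (e p + e q) =
      (if m-l+1 ≤ p ∧ p ≤ m then 1 else 0) + (if m-l+1 ≤ q ∧ q ≤ m then 1 else 0) := by
  rw [psi, L_add, L_Icc_e, L_Icc_e]

lemma psi_single (m l p : ℕ) :
    psi m l (e p) = (if m-l+1 ≤ p ∧ p ≤ m then 1 else 0) := by
  rw [psi, L_Icc_e]

lemma sig_minus (m p q : ℕ) :
    sig m (e p - e q) =
      (if 1 ≤ p ∧ p ≤ m then 1 else 0) - (if 1 ≤ q ∧ q ≤ m then 1 else 0) := by
  rw [sig, L_sub, L_Icc_e, L_Icc_e]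

lemma sig_plus (m p q : ℕ) :
    sig m (e p + e q) =
      (if 1 ≤ p ∧ p ≤ m then 1 else 0) + (if 1 ≤ q ∧ q ≤ m then 1 else 0) := by
  rw [sig, L_add, L_Icc_e, L_Icc_e]

lemma sig_single (m p : ℕ) :
    sig m (e p) = (if 1 ≤ p ∧ p ≤ m then 1 else 0) := by
  rw [sig, L_Icc_e]

lemma coord_minus (p q x : ℕ) :
    (e p - e q) x = (if x = p then 1 else 0) - (if x = q then 1 else 0) := by
  simp [e_apply]

lemma coord_plus (p q x : ℕ) :
    (e p + e q) x = (if x = p then 1 else 0) + (if x = q then 1 else 0) := by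
  simp [e_apply]

/-- The height functional is positive on positive roots. -/
lemma ht_pos (m : ℕ) (v : ℕ → ℤ) (hv : v ∈ Rpos m) : 0 < ht m v := by
  rcases hv with ⟨p, q, hp, hpq, hq, (rfl | rfl)⟩ | ⟨p, hp1, hp2, rfl⟩
  · rw [ht, L_sub, L_e, L_e]
    simp only [Finset.mem_Icc]
    split_ifs <;> omega
  · rw [ht, L_add, L_e, L_e]
    simp only [Finset.mem_Icc]
    split_ifs <;> omega
  · rw [ht, L_e]
    simp only [Finset.mem_Icc]
    split_ifs <;> omega

/-- Triples `(v j, ψ v, σ v)` of roots in `R⁺ ∖ S`. -/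
lemma triple (m j l : ℕ) (hj1 : 1 ≤ j) (hjl : j + l ≤ m) (v : ℕ → ℤ)
    (hv1 : v ∈ Rpos m) (hv2 : v ∉ S m j l) :
    T3 (v j) (psi m l v) (sig m v) := by
  rcases hv1 with ⟨p, q, hp, hpq, hq, (rfl | rfl)⟩ | ⟨p, hp1, hp2, rfl⟩
  · have hpj : p ≠ j := by
      rintro rfl
      exact hv2 (Or.inl (Or.inl ⟨q, hpq, hq, rfl⟩))
    rw [T3, coord_minus, psi_minus, sig_minus]
    split_ifs <;> norm_num <;> omega
  · have hpj : ¬ (p = j ∧ m - l + 1 ≤ q) := by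
      rintro ⟨rfl, hq1⟩
      exact hv2 (Or.inr ⟨q, hq1, hq, rfl⟩)
    rw [T3, coord_plus, psi_plus, sig_plus]
    split_ifs <;> norm_num <;> omega
  · have hpj : p ≠ j := by
      rintro rfl
      exact hv2 (Or.inl (Or.inr rfl))
    rw [T3, e_apply, psi_single, sig_single]
    split_ifs <;> norm_num <;> omega

/-- Triples `(v j, ψ v, σ v)` of elements of `S`. -/
lemma Striple (m j l : ℕ) (hj1 : 1 ≤ j) (hjl : j + l ≤ m) (hl1 : 1 ≤ l)
    (v : ℕ → ℤ) (hv : v ∈ S m j l) :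
    v j = 1 ∧
    ((psi m l v = -1 ∧ sig m v = 0) ∨ (psi m l v = 0 ∧ sig m v = 0) ∨
     (psi m l v = 0 ∧ sig m v = 1) ∨ (psi m l v = 1 ∧ sig m v = 2)) := by
  rcases hv with (⟨k, hk1, hk2, rfl⟩ | rfl) | ⟨k, hk1, hk2, rfl⟩
  · rw [coord_minus, psi_minus, sig_minus]
    split_ifs <;> norm_num <;> omega
  · rw [e_apply, psi_single, sig_single]
    split_ifs <;> norm_num <;> omega
  · rw [coord_plus, psi_plus, sig_plus]
    split_ifs <;> norm_num <;> omega

/-- `R⁺ ∖ S` is closed: for `α, β ∈ R⁺ ∖ S` and naturals `a, b` with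
`aα + bβ ∈ R`, one has `aα + bβ ∈ R⁺ ∖ S`. -/
theorem closedness_typeB (m j l : ℕ) (hm : 2 ≤ m)
    (hj1 : 1 ≤ j) (hj2 : j ≤ m - 1) (hl1 : 1 ≤ l) (hl2 : l ≤ m - j)
    (α β : ℕ → ℤ) (hα : α ∈ Rpos m \ S m j l) (hβ : β ∈ Rpos m \ S m j l)
    (a b : ℕ) (hab : a • α + b • β ∈ Rall m) :
    a • α + b • β ∈ Rpos m \ S m j l := by
  have hjl : j + l ≤ m := by omega
  obtain ⟨hα1, hα2⟩ := hα
  obtain ⟨hβ1, hβ2⟩ := hβ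
  have hfα : 0 < ht m α := ht_pos m α hα1
  have hfβ : 0 < ht m β := ht_pos m β hβ1
  have hfγ : ht m (a • α + b • β) = a * ht m α + b * ht m β :=
    L_comb _ _ a b α β
  by_cases hab0 : a = 0 ∧ b = 0
  · exfalso
    obtain ⟨rfl, rfl⟩ := hab0
    have h0 : ht m ((0:ℕ) • α + (0:ℕ) • β) = 0 := by rw [hfγ]; push_cast; ring
    rcases hab with h | ⟨w, hw, hww⟩
    · have := ht_pos m _ h
      omega
    · have hw' := ht_pos m w hw
      rw [hww, ht, L_neg] at h0
      rw [ht] at hw'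
      omega
  · have h1 : 0 ≤ (a:ℤ) * ht m α := mul_nonneg (Int.natCast_nonneg a) hfα.le
    have h2 : 0 ≤ (b:ℤ) * ht m β := mul_nonneg (Int.natCast_nonneg b) hfβ.le
    have hfγpos : 0 < ht m (a • α + b • β) := by
      rw [hfγ]
      rcases (show 1 ≤ a ∨ 1 ≤ b by omega) with h | h
      · have ha' : (1:ℤ) ≤ (a:ℤ) := by exact_mod_cast h
        nlinarith
      · have hb' : (1:ℤ) ≤ (b:ℤ) := by exact_mod_cast h
        nlinarith
    have hpos : a • α + b • β ∈ Rpos m := by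
      rcases hab with h | ⟨w, hw, hww⟩
      · exact h
      · exfalso
        have hw' := ht_pos m w hw
        rw [hww, ht, L_neg] at hfγpos
        rw [ht] at hw'
        omega
    refine ⟨hpos, fun hS => ?_⟩
    have hj' : (a • α + b • β) j = a * α j + b * β j := coord_comb a b α β j
    have hψ' : psi m l (a • α + b • β) = a * psi m l α + b * psi m l β :=
      L_comb _ _ a b α β
    have hσ' : sig m (a • α + b • β) = a * sig m α + b * sig m β :=
      L_comb _ _ a b α β
    obtain ⟨hg1, hg2⟩ := Striple m j l hj1 hjl hl1 _ hS
    have ha' := triple m j l hj1 hjl α hα1 hα2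
    have hb' := triple m j l hj1 hjl β hβ1 hβ2
    rw [T3] at ha' hb'
    rcases ha' with ⟨e1,e2,e3⟩|⟨e1,e2,e3⟩|⟨e1,e2,e3⟩|⟨e1,e2,e3⟩|⟨e1,e2,e3⟩|⟨e1,e2,e3⟩|⟨e1,e2,e3⟩|⟨e1,e2,e3⟩|⟨e1,e2,e3⟩ <;>
      rcases hb' with ⟨f1,f2,f3⟩|⟨f1,f2,f3⟩|⟨f1,f2,f3⟩|⟨f1,f2,f3⟩|⟨f1,f2,f3⟩|⟨f1,f2,f3⟩|⟨f1,f2,f3⟩|⟨f1,f2,f3⟩|⟨f1,f2,f3⟩ <;>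
      rw [e1, f1] at hj' <;> rw [e2, f2] at hψ' <;> rw [e3, f3] at hσ' <;>
      omega

end Stmt0
end

section
/- Let k be a field and n ≥ 1. Let c_1, …, c_n and d_{j,i} (for 1 ≤ i < j ≤ n) be natural numbers. In the polynomial ring k[a_{1,1}, a_{1,2}, …, a_{n,1}, a_{n,2}, c] define recursively E_1 = a_{1,1}a_{1,2} + (−1)^{1+c_1} c^{c_1} and, for 1 ≤ j ≤ n−1, E_{j+1} = a_{j+1,1}a_{j+1,2} + (−1)^{1+c_{j+1}} c^{c_{j+1}} ∏_{i=1}^{j} E_i^{d_{j+1,i}}. Then each E_i is nonzero, ord(E_1) = min{2, c_1}, and for every 2 ≤ i ≤ n, ord(E_i) = min{2, c_i + Σ_{j=1}^{i−1} d_{i,j} · ord(E_j)}. -/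
/- STATEMENT 4: orders of vanishing of the recursively defined polynomials `E_i`.
   The polynomial ring `k[a_{1,1}, a_{1,2}, …, a_{n,1}, a_{n,2}, c]` is modelled as
   multivariate polynomials in the variables `some (i, false) = a_{i,1}`,
   `some (i, true) = a_{i,2}` (for `1 ≤ i ≤ n`) and `none = c`. -/

namespace Stmt4

open MvPolynomial

/-- The order of vanishing at the origin of a polynomial: the minimum total degree
of a monomial occurring with nonzero coefficient. -/
noncomputable def ord {σ : Type*} {k : Type*} [CommSemiring k] (P : MvPolynomial σ k) : ℕ :=
  sInf ((fun s : σ →₀ ℕ => s.sum fun _ e => e) '' (P.support : Set (σ →₀ ℕ)))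

section OrdLemmas

variable {σ : Type*} {k : Type*} [CommRing k] [IsDomain k]

noncomputable def psi (σ : Type*) (k : Type*) [CommRing k] :
    MvPolynomial σ k →ₐ[k] Polynomial (MvPolynomial σ k) :=
  aeval fun i => Polynomial.C (X i) * Polynomial.X

lemma psi_monomial (s : σ →₀ ℕ) (a : k) :
    psi σ k (monomial s a) =
      Polynomial.C (monomial s a) * Polynomial.X ^ (s.sum fun _ e => e) := by
  classical
  rw [monomial_eq, map_mul]
  have h1 : psi σ k (C a) = Polynomial.C (C a) := by
    rw [psi, aeval_C, Polynomial.algebraMap_apply, MvPolynomial.algebraMap_eq]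
  have h2 : psi σ k (s.prod fun n e => X n ^ e) =
      Polynomial.C (s.prod fun n e => X n ^ e) * Polynomial.X ^ (s.sum fun _ e => e) := by
    simp only [Finsupp.prod]
    rw [map_prod]
    have : ∀ i ∈ s.support, psi σ k (X i ^ s i) =
        Polynomial.C (X i ^ s i) * Polynomial.X ^ s i := by
      intro i _
      rw [map_pow]
      simp only [psi, aeval_X]
      rw [mul_pow, ← Polynomial.C_pow]
    rw [Finset.prod_congr rfl this, Finset.prod_mul_distrib, ← map_prod, Finset.prod_pow_eq_pow_sum]
    simp only [Finsupp.prod, Finsupp.sum]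
  rw [h1, h2, ← mul_assoc, ← Polynomial.C_mul, ← monomial_eq]

lemma degree_eq_sum (t : σ →₀ ℕ) : t.degree = t.sum fun _ e => e := by
  rw [Finsupp.degree, Finsupp.sum]
  rfl

lemma psi_coeff (p : MvPolynomial σ k) (n : ℕ) :
    (psi σ k p).coeff n = homogeneousComponent n p := by
  classical
  induction p using MvPolynomial.induction_on' with
  | monomial s a =>
      rw [psi_monomial]
      have hhc : homogeneousComponent n (monomial s a) =
          if (s.sum fun _ e => e) = n then monomial s a else 0 := by
        ext t
        rw [coeff_homogeneousComponent, degree_eq_sum]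
        by_cases ht : t = s
        · subst ht
          split_ifs <;> simp_all [coeff_monomial]
        · have hst : s ≠ t := fun hh => ht hh.symm
          rw [coeff_monomial, if_neg hst]
          split_ifs <;> simp [coeff_monomial, hst]
      rw [Polynomial.coeff_C_mul, Polynomial.coeff_X_pow, hhc]
      by_cases h : (s.sum fun _ e => e) = n
      · simp [h]
      · simp [h, Ne.symm h]
  | add p q hp hq =>
      rw [map_add, Polynomial.coeff_add, map_add, hp, hq]

lemma psi_injective : Function.Injective (psi σ k) := by
  intro p q h
  have key : ∀ r : MvPolynomial σ k, Polynomial.eval 1 (psi σ k r) = r := by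
    intro r
    induction r using MvPolynomial.induction_on' with
    | monomial s a => rw [psi_monomial]; simp
    | add u v hu hv => rw [map_add, Polynomial.eval_add, hu, hv]
  have := congrArg (Polynomial.eval (1 : MvPolynomial σ k)) h
  rwa [key, key] at this

lemma psi_ne_zero {p : MvPolynomial σ k} (hp : p ≠ 0) : psi σ k p ≠ 0 :=
  fun h => hp (psi_injective (by rw [h, map_zero]))

lemma mem_ordSet_iff (p : MvPolynomial σ k) (n : ℕ) :
    n ∈ ((fun s : σ →₀ ℕ => s.sum fun _ e => e) '' (p.support : Set (σ →₀ ℕ))) ↔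
      (psi σ k p).coeff n ≠ 0 := by
  rw [psi_coeff]
  constructor
  · rintro ⟨s, hs, rfl⟩ h0
    have hc := coeff_homogeneousComponent (φ := p) (n := s.sum fun _ e => e) s
    rw [h0, degree_eq_sum, if_pos rfl] at hc
    simp only [Finset.mem_coe, mem_support_iff] at hs
    exact hs hc.symm
  · intro h
    by_contra hc
    apply h
    ext t
    rw [coeff_homogeneousComponent, degree_eq_sum, coeff_zero]
    split_ifs with ht
    · by_contra h0
      exact hc ⟨t, mem_support_iff.mpr h0, ht⟩
    · rfl

lemma ord_eq_natTrailingDegree {p : MvPolynomial σ k} (hp : p ≠ 0) :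
    ord p = (psi σ k p).natTrailingDegree := by
  have hne : ((fun s : σ →₀ ℕ => s.sum fun _ e => e) '' (p.support : Set _)).Nonempty :=
    Set.Nonempty.image _ (Finset.coe_nonempty.mpr (support_nonempty.mpr hp))
  apply le_antisymm
  · apply Nat.sInf_le
    rw [mem_ordSet_iff]
    have := mt Polynomial.trailingCoeff_eq_zero.mp (psi_ne_zero hp)
    rwa [Polynomial.trailingCoeff] at this
  · have := Nat.sInf_mem hne
    rw [mem_ordSet_iff] at this
    exact Polynomial.natTrailingDegree_le_of_ne_zero this

lemma ord_mul {p q : MvPolynomial σ k} (hp : p ≠ 0) (hq : q ≠ 0) :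
    ord (p * q) = ord p + ord q := by
  rw [ord_eq_natTrailingDegree (mul_ne_zero hp hq), ord_eq_natTrailingDegree hp,
    ord_eq_natTrailingDegree hq, map_mul,
    Polynomial.natTrailingDegree_mul (psi_ne_zero hp) (psi_ne_zero hq)]

lemma ord_monomial {s : σ →₀ ℕ} {a : k} (ha : a ≠ 0) :
    ord (monomial s a) = s.sum fun _ e => e := by
  classical
  rw [ord, support_monomial, if_neg ha]
  simp

lemma ord_X (i : σ) : ord (X i : MvPolynomial σ k) = 1 := by
  rw [show (X i : MvPolynomial σ k) = monomial (Finsupp.single i 1) 1 from rfl,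
    ord_monomial one_ne_zero]
  simp

lemma ord_C (a : k) : ord (C a : MvPolynomial σ k) = 0 := by
  by_cases ha : a = 0
  · subst ha
    rw [map_zero, ord]
    simp
  · rw [show (C a : MvPolynomial σ k) = monomial 0 a from rfl, ord_monomial ha]
    simp

lemma ord_one : ord (1 : MvPolynomial σ k) = 0 := by
  simpa using ord_C (1 : k)

lemma ord_pow {p : MvPolynomial σ k} (hp : p ≠ 0) (m : ℕ) : ord (p ^ m) = m * ord p := by
  induction m with
  | zero => simpa using ord_one
  | succ m ih =>
      rw [pow_succ, ord_mul (pow_ne_zero _ hp) hp, ih]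
      ring

lemma ord_prod {ι : Type*} {t : Finset ι} {f : ι → MvPolynomial σ k}
    (hf : ∀ i ∈ t, f i ≠ 0) :
    ord (∏ i ∈ t, f i) = ∑ i ∈ t, ord (f i) := by
  classical
  induction t using Finset.induction_on with
  | empty => simpa using ord_one
  | @insert a t ha ih =>
      rw [Finset.prod_insert ha, Finset.sum_insert ha,
        ord_mul (hf a (Finset.mem_insert_self a t))
          (Finset.prod_ne_zero_iff.mpr fun i hi => hf i (Finset.mem_insert_of_mem hi)),
        ih fun i hi => hf i (Finset.mem_insert_of_mem hi)]

lemma support_add_eq' {p q : MvPolynomial σ k} (h : Disjoint p.support q.support) :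
    ((p + q).support : Set (σ →₀ ℕ)) = ↑p.support ∪ ↑q.support := by
  ext s
  simp only [Set.mem_union, Finset.mem_coe, mem_support_iff, coeff_add]
  constructor
  · intro h0
    by_contra hc
    push_neg at hc
    rw [hc.1, hc.2, add_zero] at h0
    exact h0 rfl
  · intro h0
    rcases Classical.em (coeff s p = 0) with hp0 | hp0
    · rcases h0 with h1 | h1
      · exact absurd hp0 h1
      · rw [hp0, zero_add]; exact h1
    · have hq0 : coeff s q = 0 := by
        by_contra hq0
        exact (Finset.disjoint_left.mp h (mem_support_iff.mpr hp0)) (mem_support_iff.mpr hq0)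
      rw [hq0, add_zero]; exact hp0

lemma add_ne_zero_of_disjoint {p q : MvPolynomial σ k} (hp : p ≠ 0)
    (h : Disjoint p.support q.support) : p + q ≠ 0 := by
  obtain ⟨s, hs⟩ := support_nonempty.mpr hp
  have hq0 : coeff s q = 0 := by
    by_contra hq0
    exact (Finset.disjoint_left.mp h hs) (mem_support_iff.mpr hq0)
  intro h0
  have : coeff s (p + q) = coeff s p := by rw [coeff_add, hq0, add_zero]
  rw [h0, coeff_zero] at this
  exact mem_support_iff.mp hs this.symm

lemma sInf_union_nonempty {A B : Set ℕ} (hA : A.Nonempty) (hB : B.Nonempty) :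
    sInf (A ∪ B) = min (sInf A) (sInf B) := by
  refine le_antisymm
    (le_min (Nat.sInf_le (Or.inl (Nat.sInf_mem hA))) (Nat.sInf_le (Or.inr (Nat.sInf_mem hB)))) ?_
  rcases Nat.sInf_mem (hA.mono Set.subset_union_left) with h | h
  · exact min_le_of_left_le (Nat.sInf_le h)
  · exact min_le_of_right_le (Nat.sInf_le h)

lemma ord_add_disjoint {p q : MvPolynomial σ k} (hp : p ≠ 0) (hq : q ≠ 0)
    (h : Disjoint p.support q.support) :
    ord (p + q) = min (ord p) (ord q) := by
  rw [ord, support_add_eq' h, Set.image_union,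
    sInf_union_nonempty
      (Set.Nonempty.image _ (Finset.coe_nonempty.mpr (support_nonempty.mpr hp)))
      (Set.Nonempty.image _ (Finset.coe_nonempty.mpr (support_nonempty.mpr hq)))]
  rfl

end OrdLemmas

variable {k : Type*} [Field k]

/-- `E_1 = a_{1,1}a_{1,2} + (−1)^{1+c_1} c^{c_1}` and, recursively,
`E_{j+1} = a_{j+1,1}a_{j+1,2} + (−1)^{1+c_{j+1}} c^{c_{j+1}} ∏_{i=1}^{j} E_i^{d_{j+1,i}}`.
(`E 0` is a junk value, indices are 1-based.) -/
noncomputable def E (k : Type*) [Field k] (c : ℕ → ℕ) (d : ℕ → ℕ → ℕ) :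
    ℕ → MvPolynomial (Option (ℕ × Bool)) k
  | 0 => 1
  | j + 1 =>
      X (some (j + 1, false)) * X (some (j + 1, true)) +
        (-1 : MvPolynomial (Option (ℕ × Bool)) k) ^ (1 + c (j + 1)) *
          X none ^ c (j + 1) *
          ∏ i ∈ (Finset.range j).attach, E k c d (i.1 + 1) ^ d (j + 1) (i.1 + 1)
  decreasing_by
    have := i.2
    simp only [Finset.mem_range] at this
    omega


section ELemmas

variable (c : ℕ → ℕ) (d : ℕ → ℕ → ℕ)

lemma vars_T_aux (j : ℕ)
    (IH : ∀ i, i ≤ j → ∀ v ∈ (E k c d i).vars, ∀ m b, v = some (m, b) → m ≤ i) :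
    ∀ v ∈ ((-1 : MvPolynomial (Option (ℕ × Bool)) k) ^ (1 + c (j + 1)) *
        X none ^ c (j + 1) *
        ∏ i ∈ (Finset.range j).attach, E k c d (i.1 + 1) ^ d (j + 1) (i.1 + 1)).vars,
      ∀ m b, v = some (m, b) → m ≤ j := by
  classical
  intro v hv m b hvm
  subst hvm
  rcases Finset.mem_union.mp (vars_mul _ _ hv) with h | h
  · rcases Finset.mem_union.mp (vars_mul _ _ h) with h1 | h1
    · have hC : (-1 : MvPolynomial (Option (ℕ × Bool)) k) ^ (1 + c (j + 1)) =
          C ((-1 : k) ^ (1 + c (j + 1))) := by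
        rw [map_pow, map_neg, map_one]
      rw [hC, vars_C] at h1
      exact absurd h1 (Finset.notMem_empty _)
    · have h2 := vars_pow (X none : MvPolynomial (Option (ℕ × Bool)) k) (c (j + 1)) h1
      rw [vars_X] at h2
      simp at h2
  · have h2 := vars_prod (fun i : {x // x ∈ Finset.range j} =>
      E k c d (i.1 + 1) ^ d (j + 1) (i.1 + 1)) h
    rcases Finset.mem_biUnion.mp h2 with ⟨i, _, hvi⟩
    have h3 := vars_pow _ _ hvi
    have hlt : i.1 < j := Finset.mem_range.mp i.2
    have h4 := IH (i.1 + 1) (by omega) _ h3 m b rfl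
    omega

lemma vars_E : ∀ i, ∀ v ∈ (E k c d i).vars, ∀ m b, v = some (m, b) → m ≤ i := by
  classical
  intro i
  induction i using Nat.strong_induction_on with
  | _ i IH =>
    match i with
    | 0 =>
        intro v hv
        rw [E, vars_one] at hv
        exact absurd hv (Finset.notMem_empty _)
    | j + 1 =>
        intro v hv m b hvm
        rw [E] at hv
        rcases Finset.mem_union.mp (vars_add_subset _ _ hv) with h | h
        · rcases Finset.mem_union.mp (vars_mul _ _ h) with h1 | h1 <;>
          · rw [vars_X] at h1
            rw [hvm] at h1
            simp only [Finset.mem_singleton, Option.some.injEq, Prod.mk.injEq] at h1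
            omega
        · have := vars_T_aux c d j (fun i' hi' => IH i' (by omega)) v h m b hvm
          omega

lemma E_main : ∀ i, 1 ≤ i → E k c d i ≠ 0 ∧
    ord (E k c d i) =
      min 2 (c i + ∑ j ∈ Finset.Icc 1 (i - 1), d i j * ord (E k c d j)) := by
  classical
  intro i
  induction i using Nat.strong_induction_on with
  | _ i IH =>
    intro hi
    obtain ⟨j, rfl⟩ : ∃ j, i = j + 1 := ⟨i - 1, by omega⟩
    have hEne : ∀ i', 1 ≤ i' → i' < j + 1 → E k c d i' ≠ 0 :=
      fun i' h1 h2 => (IH i' h2 h1).1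
    have hs0 : (X (some (j + 1, false)) * X (some (j + 1, true)) :
        MvPolynomial (Option (ℕ × Bool)) k) =
        monomial (Finsupp.single (some (j + 1, false)) 1 +
          Finsupp.single (some (j + 1, true)) 1) 1 := by
      rw [X, X, monomial_mul, mul_one]
    have hAne : (X (some (j + 1, false)) * X (some (j + 1, true)) :
        MvPolynomial (Option (ℕ × Bool)) k) ≠ 0 := by
      rw [hs0]
      simp [monomial_eq_zero]
    have hordA : ord (X (some (j + 1, false)) * X (some (j + 1, true)) :
        MvPolynomial (Option (ℕ × Bool)) k) = 2 := by
      rw [hs0, ord_monomial one_ne_zero,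
        Finsupp.sum_add_index' (fun _ => rfl) (fun _ _ _ => rfl),
        Finsupp.sum_single_index rfl, Finsupp.sum_single_index rfl]
    have hu : ((-1 : MvPolynomial (Option (ℕ × Bool)) k) ^ (1 + c (j + 1))) =
        C ((-1 : k) ^ (1 + c (j + 1))) := by
      rw [map_pow, map_neg, map_one]
    have hu_ne : ((-1 : MvPolynomial (Option (ℕ × Bool)) k) ^ (1 + c (j + 1))) ≠ 0 := by
      rw [hu]
      simp [C_eq_zero]
    have hord_u : ord ((-1 : MvPolynomial (Option (ℕ × Bool)) k) ^ (1 + c (j + 1))) = 0 := by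
      rw [hu, ord_C]
    have hx_ne : (X none : MvPolynomial (Option (ℕ × Bool)) k) ^ c (j + 1) ≠ 0 :=
      pow_ne_zero _ (X_ne_zero _)
    have hord_x : ord ((X none : MvPolynomial (Option (ℕ × Bool)) k) ^ c (j + 1)) = c (j + 1) := by
      rw [ord_pow (X_ne_zero _), ord_X, mul_one]
    have hfac_ne : ∀ i ∈ (Finset.range j).attach,
        E k c d (i.1 + 1) ^ d (j + 1) (i.1 + 1) ≠ (0 : MvPolynomial (Option (ℕ × Bool)) k) := by
      intro i _
      have hlt : i.1 < j := Finset.mem_range.mp i.2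
      exact pow_ne_zero _ (hEne (i.1 + 1) (by omega) (by omega))
    have hP_ne : (∏ i ∈ (Finset.range j).attach, E k c d (i.1 + 1) ^ d (j + 1) (i.1 + 1)) ≠
        (0 : MvPolynomial (Option (ℕ × Bool)) k) :=
      Finset.prod_ne_zero_iff.mpr hfac_ne
    have hordP : ord (∏ i ∈ (Finset.range j).attach, E k c d (i.1 + 1) ^ d (j + 1) (i.1 + 1)) =
        ∑ i ∈ (Finset.range j).attach, d (j + 1) (i.1 + 1) * ord (E k c d (i.1 + 1)) := by
      rw [ord_prod hfac_ne]
      refine Finset.sum_congr rfl fun i _ => ?_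
      have hlt : i.1 < j := Finset.mem_range.mp i.2
      exact ord_pow (hEne (i.1 + 1) (by omega) (by omega)) _
    have hT_ne : ((-1 : MvPolynomial (Option (ℕ × Bool)) k) ^ (1 + c (j + 1)) *
        X none ^ c (j + 1) *
        ∏ i ∈ (Finset.range j).attach, E k c d (i.1 + 1) ^ d (j + 1) (i.1 + 1)) ≠ 0 :=
      mul_ne_zero (mul_ne_zero hu_ne hx_ne) hP_ne
    have hordT : ord ((-1 : MvPolynomial (Option (ℕ × Bool)) k) ^ (1 + c (j + 1)) *
        X none ^ c (j + 1) *
        ∏ i ∈ (Finset.range j).attach, E k c d (i.1 + 1) ^ d (j + 1) (i.1 + 1)) =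
        c (j + 1) + ∑ i ∈ (Finset.range j).attach,
          d (j + 1) (i.1 + 1) * ord (E k c d (i.1 + 1)) := by
      rw [ord_mul (mul_ne_zero hu_ne hx_ne) hP_ne, ord_mul hu_ne hx_ne, hord_u, hord_x, hordP,
        zero_add]
    have hdisj : Disjoint
        (support (X (some (j + 1, false)) * X (some (j + 1, true)) :
          MvPolynomial (Option (ℕ × Bool)) k))
        (support ((-1 : MvPolynomial (Option (ℕ × Bool)) k) ^ (1 + c (j + 1)) *
          X none ^ c (j + 1) *
          ∏ i ∈ (Finset.range j).attach, E k c d (i.1 + 1) ^ d (j + 1) (i.1 + 1))) := by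
      rw [hs0, support_monomial, if_neg (one_ne_zero : (1 : k) ≠ 0),
        Finset.disjoint_singleton_left]
      intro hmem
      have hvars : some (j + 1, false) ∈
          ((-1 : MvPolynomial (Option (ℕ × Bool)) k) ^ (1 + c (j + 1)) *
            X none ^ c (j + 1) *
            ∏ i ∈ (Finset.range j).attach, E k c d (i.1 + 1) ^ d (j + 1) (i.1 + 1)).vars := by
        refine (mem_vars _).mpr ⟨_, hmem, ?_⟩
        rw [Finsupp.mem_support_iff]
        simp [Finsupp.single_apply]
      have := vars_T_aux c d j (fun i' _ => vars_E c d i') _ hvars (j + 1) false rfl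
      omega
    rw [E]
    constructor
    · exact add_ne_zero_of_disjoint hAne hdisj
    · rw [ord_add_disjoint hAne hT_ne hdisj, hordA, hordT]
      congr 2
      rw [Finset.sum_attach (Finset.range j)
        (fun i => d (j + 1) (i + 1) * ord (E k c d (i + 1)))]
      simp only [Nat.add_sub_cancel]
      rw [← Finset.Ico_add_one_right_eq_Icc, Finset.sum_Ico_eq_sum_range]
      refine Finset.sum_congr (by norm_num) fun i _ => by rw [add_comm 1 i]

end ELemmas

theorem ord_E (n : ℕ) (hn : 1 ≤ n) (c : ℕ → ℕ) (d : ℕ → ℕ → ℕ) :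
    (∀ i, 1 ≤ i → i ≤ n → E k c d i ≠ 0) ∧
    ord (E k c d 1) = min 2 (c 1) ∧
    ∀ i, 2 ≤ i → i ≤ n →
      ord (E k c d i) =
        min 2 (c i + ∑ j ∈ Finset.Icc 1 (i - 1), d i j * ord (E k c d j)) := by
  refine ⟨fun i h1 _ => (E_main c d i h1).1, ?_, fun i h2 _ => (E_main c d i (by omega)).2⟩
  have h := (E_main (k := k) c d 1 le_rfl).2
  simpa using h

end Stmt4
end

section
/- Let k be a field and n ≥ 1. Define ψ : SL(2, k)^n → Mat_{2n}(k) by sending an n-tuple of matrices ([[a_i, b_i], [c_i, d_i]])_{i=1}^n to the block matrix [[diag(a_1, …, a_n), diag(b_1, …, b_n)·J], [diag(c_n, …, c_1)·J, diag(d_n, …, d_1)]]. Then ψ(g)ᵀ Ω ψ(g) = Ω for every g ∈ SL(2, k)^n (so ψ takes values in the symplectic group Sp(2n, k) for the form Ω), and ψ is a group homomorphism: ψ(g·h) = ψ(g)·ψ(h) for all g, h ∈ SL(2, k)^n. -/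
/- STATEMENT 10: the embedding `ψ : SL(2,k)^n → Mat_{2n}(k)` lands in the
   symplectic group for the form `Ω` and is a group homomorphism.
   We index `k^{2n}` by `Fin n ⊕ Fin n`. -/

namespace Stmt10

open Matrix

variable (k : Type*) [Field k] (n : ℕ)

/-- The n×n antidiagonal matrix `J` (ones on the antidiagonal). -/
def J : Matrix (Fin n) (Fin n) k :=
  fun i j => if i.val + j.val + 1 = n then 1 else 0

/-- The symplectic form matrix `Ω = [[0, −J], [J, 0]]`. -/
def Ω : Matrix (Fin n ⊕ Fin n) (Fin n ⊕ Fin n) k :=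
  Matrix.fromBlocks 0 (-(J k n)) (J k n) 0

/-- `ψ` sends `([[a_i, b_i],[c_i, d_i]])_{i=1}^n` to the block matrix
`[[diag(a_1, …, a_n), diag(b_1, …, b_n)·J], [diag(c_n, …, c_1)·J, diag(d_n, …, d_1)]]`. -/
noncomputable def ψ (g : Fin n → Matrix.SpecialLinearGroup (Fin 2) k) :
    Matrix (Fin n ⊕ Fin n) (Fin n ⊕ Fin n) k :=
  Matrix.fromBlocks
    (Matrix.diagonal fun i => (g i : Matrix (Fin 2) (Fin 2) k) 0 0)
    (Matrix.diagonal (fun i => (g i : Matrix (Fin 2) (Fin 2) k) 0 1) * J k n)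
    (Matrix.diagonal (fun i => (g i.rev : Matrix (Fin 2) (Fin 2) k) 1 0) * J k n)
    (Matrix.diagonal fun i => (g i.rev : Matrix (Fin 2) (Fin 2) k) 1 1)

lemma rev_eq_comm {i j : Fin n} : i.rev = j ↔ i = j.rev := by
  rw [Fin.ext_iff, Fin.ext_iff, Fin.val_rev, Fin.val_rev]
  omega

lemma J_apply (i j : Fin n) : J k n i j = if j = i.rev then 1 else 0 := by
  unfold J
  congr 1
  simp only [Fin.ext_iff, Fin.val_rev]
  exact propext (by omega)

lemma J_transpose : (J k n)ᵀ = J k n := by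
  ext i j
  unfold J
  show (if j.val + i.val + 1 = n then (1:k) else 0) = if i.val + j.val + 1 = n then 1 else 0
  congr 1
  exact propext (by omega)

lemma J_mul (M : Matrix (Fin n) (Fin n) k) :
    J k n * M = M.submatrix Fin.rev id := by
  ext i j
  rw [mul_apply]
  simp [J_apply, ite_mul, Finset.sum_ite_eq']

lemma mul_J (M : Matrix (Fin n) (Fin n) k) :
    M * J k n = M.submatrix id Fin.rev := by
  ext i j
  rw [mul_apply]
  simp only [J_apply, mul_ite, mul_one, mul_zero]
  have key : ∀ x : Fin n, (if j = x.rev then M i x else 0) = (if x = j.rev then M i x else 0) :=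
    fun x => by
      congr 1
      exact propext ⟨fun h => (rev_eq_comm n).mp h.symm, fun h => ((rev_eq_comm n).mpr h).symm⟩
  rw [Finset.sum_congr rfl (fun x _ => key x), Finset.sum_ite_eq']
  simp

lemma J_mul_diag (d : Fin n → k) :
    J k n * diagonal d = diagonal (fun i => d i.rev) * J k n := by
  rw [J_mul, mul_J]
  ext i j
  simp only [submatrix_apply, id_eq, diagonal_apply]
  exact if_congr (rev_eq_comm n) rfl rfl

lemma J_mul_J : J k n * J k n = 1 := by
  rw [J_mul]
  ext i j
  simp only [submatrix_apply, J_apply, Fin.rev_rev, one_apply, id_eq]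
  exact if_congr eq_comm rfl rfl

lemma d_mul_dJ (a b : Fin n → k) :
    diagonal a * (diagonal b * J k n) = diagonal (fun i => a i * b i) * J k n := by
  rw [← mul_assoc, diagonal_mul_diagonal]

lemma dJ_mul_d (b d : Fin n → k) :
    (diagonal b * J k n) * diagonal d = diagonal (fun i => b i * d i.rev) * J k n := by
  rw [mul_assoc, J_mul_diag, ← mul_assoc, diagonal_mul_diagonal]

lemma dJ_mul_dJ (b c : Fin n → k) :
    (diagonal b * J k n) * (diagonal c * J k n) = diagonal (fun i => b i * c i.rev) := by
  rw [← mul_assoc, mul_assoc (diagonal b), J_mul_diag, ← mul_assoc, diagonal_mul_diagonal,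
    mul_assoc, J_mul_J, mul_one]

lemma dJ_transpose (b : Fin n → k) :
    (diagonal b * J k n)ᵀ = diagonal (fun i => b i.rev) * J k n := by
  rw [transpose_mul, J_transpose, diagonal_transpose, J_mul_diag]


lemma dJ_mul_J (b : Fin n → k) :
    (diagonal b * J k n) * J k n = diagonal b := by
  rw [mul_assoc, J_mul_J, mul_one]


theorem psi_symplectic_and_hom (hn : 1 ≤ n) :
    (∀ g : Fin n → Matrix.SpecialLinearGroup (Fin 2) k,
        (ψ k n g)ᵀ * Ω k n * ψ k n g = Ω k n) ∧
    (∀ g h : Fin n → Matrix.SpecialLinearGroup (Fin 2) k,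
        ψ k n (g * h) = ψ k n g * ψ k n h) := by
  constructor
  · intro g
    have det : ∀ i : Fin n, (g i : Matrix (Fin 2) (Fin 2) k) 0 0 * (g i) 1 1
        - (g i) 0 1 * (g i) 1 0 = 1 := fun i => by
      have h := (g i).2
      rwa [Matrix.det_fin_two] at h
    unfold ψ Ω
    rw [fromBlocks_transpose, fromBlocks_multiply, fromBlocks_multiply]
    simp only [diagonal_transpose, dJ_transpose, Fin.rev_rev, Matrix.mul_zero,
      Matrix.zero_mul, add_zero, zero_add, Matrix.mul_neg, Matrix.neg_mul,
      dJ_mul_J, d_mul_dJ, dJ_mul_d, dJ_mul_dJ, diagonal_mul_diagonal, neg_neg]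
    have hd : ∀ f f' : Fin n → k, diagonal f + -diagonal f' = diagonal (fun i => f i - f' i) := by
      intro f f'
      ext i j
      by_cases hij : i = j <;> simp [diagonal_apply, hij, sub_eq_add_neg]
    have hdJ : ∀ f f' : Fin n → k, diagonal f * J k n + -(diagonal f' * J k n)
        = diagonal (fun i => f i - f' i) * J k n := by
      intro f f'
      rw [← Matrix.neg_mul, ← Matrix.add_mul, hd]
    rw [hd, hd, hdJ, hdJ]
    refine Matrix.fromBlocks_inj.mpr ⟨?_, ?_, ?_, ?_⟩
    · rw [show (fun i => (g i : Matrix (Fin 2) (Fin 2) k) 1 0 * (g i) 0 0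
          - (g i) 0 0 * (g i) 1 0) = fun _ => (0:k) from funext fun i => by ring,
        diagonal_zero]
    · rw [show (fun i => (g i : Matrix (Fin 2) (Fin 2) k) 1 0 * (g i) 0 1
          - (g i) 0 0 * (g i) 1 1) = fun _ => (-1:k) from funext fun i => by
            linear_combination -(det i),
        show Matrix.diagonal (fun _ : Fin n => (-1:k)) * J k n = -J k n from by
          ext i j
          rw [Matrix.mul_apply]
          simp [diagonal_apply, ite_mul, Finset.sum_ite_eq]]
    · rw [show (fun i : Fin n => (g i.rev : Matrix (Fin 2) (Fin 2) k) 1 1 * (g i.rev) 0 0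
          - (g i.rev) 0 1 * (g i.rev) 1 0) = fun _ => (1:k) from funext fun i => by
            linear_combination det i.rev,
        show Matrix.diagonal (fun _ : Fin n => (1:k)) = 1 from diagonal_one, Matrix.one_mul]
    · rw [show (fun i : Fin n => (g i.rev : Matrix (Fin 2) (Fin 2) k) 1 1 * (g i.rev) 0 1
          - (g i.rev) 0 1 * (g i.rev) 1 1) = fun _ => (0:k) from funext fun i => by ring,
        diagonal_zero]
  · intro g h
    unfold ψ
    rw [fromBlocks_multiply]
    simp only [d_mul_dJ, dJ_mul_d, dJ_mul_dJ, diagonal_mul_diagonal, Fin.rev_rev]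
    have entry : ∀ (x y : Fin 2) (i : Fin n), ((g * h) i : Matrix (Fin 2) (Fin 2) k) x y
        = (g i : Matrix (Fin 2) (Fin 2) k) x 0 * (h i : Matrix (Fin 2) (Fin 2) k) 0 y
          + (g i : Matrix (Fin 2) (Fin 2) k) x 1 * (h i : Matrix (Fin 2) (Fin 2) k) 1 y := by
      intro x y i
      rw [Pi.mul_apply, Matrix.SpecialLinearGroup.coe_mul, Matrix.mul_apply, Fin.sum_univ_two]
    have dadd : ∀ f f' : Fin n → k, diagonal f + diagonal f' = diagonal (fun i => f i + f' i) := by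
      intro f f'
      ext i j
      by_cases hij : i = j <;> simp [diagonal_apply, hij]
    simp only [← Matrix.add_mul]
    rw [dadd, dadd, dadd, dadd]
    have hcongr : ∀ f f' : Fin n → k, f = f' → diagonal f * J k n = diagonal f' * J k n :=
      fun f f' e => by rw [e]
    refine Matrix.fromBlocks_inj.mpr ⟨?_, ?_, ?_, ?_⟩
    · exact congrArg diagonal (funext fun i : Fin n => entry 0 0 i)
    · exact hcongr _ _ (funext fun i : Fin n => entry 0 1 i)
    · exact hcongr _ _ (funext fun i : Fin n => entry 1 0 i.rev)
    · exact congrArg diagonal (funext fun i : Fin n => entry 1 1 i.rev)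


end Stmt10
end

section
/- Let k be a field, n ≥ 1, and let A ∈ Mat_n(k) be a matrix of rank r. Let X = (x_{ij}) be the n×n matrix of indeterminates and consider the polynomial det(A + X) ∈ k[x_{11}, …, x_{nn}]. Then the minimum total degree of a monomial occurring in det(A + X) with nonzero coefficient equals n − r. (Equivalently: the order of vanishing at A of the determinant function on the space of n×n matrices equals n − rank(A).) -/
/- STATEMENT 11: the order of vanishing at `A` of the determinant on n×n
   matrices equals `n − rank(A)`. -/

namespace Stmt11

open MvPolynomial

/-- The minimum total degree of a monomial occurring with nonzero coefficient. -/
noncomputable def ord {σ : Type*} {k : Type*} [CommSemiring k] (P : MvPolynomial σ k) : ℕ :=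
  sInf ((fun s : σ →₀ ℕ => s.sum fun _ e => e) '' (P.support : Set (σ →₀ ℕ)))

section Aux

open Matrix

variable {k : Type*} [Field k] {n : ℕ}

/-- The exponent vector of the monomial `∏_{i ∈ S} x_{p i, i}`. -/
noncomputable def mon (S : Finset (Fin n)) (p : Fin n → Fin n) : (Fin n × Fin n) →₀ ℕ :=
  ∑ i ∈ S, Finsupp.single (p i, i) 1

lemma mon_insert {S : Finset (Fin n)} {p : Fin n → Fin n} {a : Fin n} (ha : a ∉ S) :
    mon (insert a S) p = Finsupp.single (p a, a) 1 + mon S p :=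
  Finset.sum_insert ha

lemma mon_apply (S : Finset (Fin n)) (p : Fin n → Fin n) (a b : Fin n) :
    mon S p (a, b) = if b ∈ S ∧ a = p b then 1 else 0 := by
  classical
  rw [mon, Finset.sum_apply']
  have h : ∀ i ∈ S, (Finsupp.single (p i, i) (1 : ℕ)) (a, b)
      = if i = b then (if a = p b then 1 else 0) else 0 := by
    intro i _
    rw [Finsupp.single_apply]
    by_cases h1 : i = b
    · subst h1
      by_cases h2 : a = p i <;> simp [Prod.ext_iff, h2, eq_comm]
    · simp [Prod.ext_iff, h1]
  rw [Finset.sum_congr rfl h, Finset.sum_ite_eq' S b]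
  by_cases hb : b ∈ S <;> simp [hb]

lemma mon_deg (S : Finset (Fin n)) (p : Fin n → Fin n) :
    ((mon S p).sum fun _ e => e) = S.card := by
  classical
  induction S using Finset.induction_on with
  | empty => simp [mon]
  | @insert a S ha ih =>
    rw [mon, Finset.sum_insert ha, Finsupp.sum_add_index' (fun _ => rfl) (fun _ _ _ => rfl),
      Finsupp.sum_single_index rfl, ← mon, ih, Finset.card_insert_of_notMem ha, add_comm]

lemma eq_of_mon_eq {S T : Finset (Fin n)} {p q : Fin n → Fin n} (h : mon S p = mon T q) :
    S = T ∧ ∀ i ∈ S, p i = q i := by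
  classical
  have hST : S = T := by
    ext b
    constructor
    · intro hb
      have h1 : mon T q (p b, b) = 1 := by rw [← h, mon_apply]; simp [hb]
      rw [mon_apply] at h1
      by_contra hbT
      rw [if_neg (by tauto)] at h1
      exact zero_ne_one h1
    · intro hb
      have h1 : mon S p (q b, b) = 1 := by rw [h, mon_apply]; simp [hb]
      rw [mon_apply] at h1
      by_contra hbS
      rw [if_neg (by tauto)] at h1
      exact zero_ne_one h1
  refine ⟨hST, fun i hi => ?_⟩
  have h1 : mon T q (p i, i) = 1 := by rw [← h, mon_apply]; simp [hi]
  rw [mon_apply] at h1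
  by_contra hpq
  rw [if_neg (by tauto)] at h1
  exact zero_ne_one h1

lemma mon_congr {S : Finset (Fin n)} {p q : Fin n → Fin n} (h : ∀ i ∈ S, p i = q i) :
    mon S p = mon S q :=
  Finset.sum_congr rfl fun i hi => by rw [h i hi]

lemma prod_X_eq (S : Finset (Fin n)) (p : Fin n → Fin n) :
    (∏ i ∈ S, (X (p i, i) : MvPolynomial (Fin n × Fin n) k)) = monomial (mon S p) 1 := by
  classical
  induction S using Finset.induction_on with
  | empty => simp [mon]
  | @insert a S ha ih =>
    have hX : (X (p a, a) : MvPolynomial (Fin n × Fin n) k)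
        = monomial (Finsupp.single (p a, a) 1) 1 := rfl
    rw [Finset.prod_insert ha, ih, hX, monomial_mul, one_mul, mon_insert ha]

/-- The determinant polynomial `det (A + X)`. -/
noncomputable def detP (A : Matrix (Fin n) (Fin n) k) : MvPolynomial (Fin n × Fin n) k :=
  Matrix.det fun i j : Fin n =>
    (MvPolynomial.C (A i j) + MvPolynomial.X (i, j) : MvPolynomial (Fin n × Fin n) k)

lemma detP_eq (A : Matrix (Fin n) (Fin n) k) :
    detP A = ∑ σ : Equiv.Perm (Fin n), ∑ t ∈ Finset.univ.powerset,
      monomial (mon (Finset.univ \ t) σ)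
        (((Equiv.Perm.sign σ : ℤ) : k) * ∏ i ∈ t, A (σ i) i) := by
  classical
  rw [detP]
  refine (Matrix.det_apply' _).trans ?_
  refine Finset.sum_congr rfl fun σ _ => ?_
  rw [Finset.prod_add, Finset.mul_sum]
  refine Finset.sum_congr rfl fun t _ => ?_
  rw [prod_X_eq (Finset.univ \ t) σ, ← map_prod,
    ← map_intCast (C : k →+* MvPolynomial (Fin n × Fin n) k), ← mul_assoc, ← C_mul,
    C_mul_monomial, mul_one]

lemma coeff_detP (A : Matrix (Fin n) (Fin n) k) (m : (Fin n × Fin n) →₀ ℕ) :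
    coeff m (detP A) = ∑ σ : Equiv.Perm (Fin n), ∑ t ∈ Finset.univ.powerset,
      if mon (Finset.univ \ t) σ = m then
        (((Equiv.Perm.sign σ : ℤ) : k) * ∏ i ∈ t, A (σ i) i) else 0 := by
  classical
  rw [detP_eq, coeff_sum]
  refine Finset.sum_congr rfl fun σ _ => ?_
  rw [coeff_sum]
  exact Finset.sum_congr rfl fun t _ => coeff_monomial _ _ _

/-- The matrix obtained from `A` by replacing, for each `j ∈ S`, the `j`-th column by the
standard basis vector `e_{p j}`. -/
def Bmat (A : Matrix (Fin n) (Fin n) k) (S : Finset (Fin n)) (p : Fin n → Fin n) :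
    Matrix (Fin n) (Fin n) k :=
  fun i j => if j ∈ S then (if i = p j then 1 else 0) else A i j

lemma coeff_mon_detP (A : Matrix (Fin n) (Fin n) k) (S : Finset (Fin n)) (p : Fin n → Fin n) :
    coeff (mon S p) (detP A) = (Bmat A S p).det := by
  classical
  rw [coeff_detP, Matrix.det_apply']
  refine Finset.sum_congr rfl fun σ _ => ?_
  rw [Finset.sum_eq_single Sᶜ]
  · have hUS : Finset.univ \ Sᶜ = S := by
      rw [← Finset.compl_eq_univ_sdiff, compl_compl]
    rw [hUS]
    have hprod : (∏ i, Bmat A S p (σ i) i)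
        = (if ∀ i ∈ S, σ i = p i then 1 else 0) * ∏ i ∈ Sᶜ, A (σ i) i := by
      rw [← Finset.prod_mul_prod_compl S]
      congr 1
      · rw [Finset.prod_congr rfl (fun i hi => show Bmat A S p (σ i) i
            = if σ i = p i then (1:k) else 0 by simp [Bmat, hi]), Finset.prod_boole]
        split_ifs <;> rfl
      · exact Finset.prod_congr rfl fun i hi => by
          simp [Bmat, (Finset.mem_compl.1 hi : i ∉ S)]
    rw [hprod]
    by_cases hc : ∀ i ∈ S, σ i = p i
    · rw [if_pos (mon_congr hc), if_pos hc, one_mul]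
    · rw [if_neg, if_neg hc, zero_mul, mul_zero]
      intro hEq
      exact hc ((eq_of_mon_eq hEq).2)
  · intro t ht hne
    rw [if_neg]
    intro hEq
    apply hne
    have h1 : Finset.univ \ t = S := (eq_of_mon_eq hEq).1
    have h2 : t = Finset.univ \ (Finset.univ \ t) :=
      (Finset.sdiff_sdiff_eq_self (Finset.subset_univ t)).symm
    rw [h2, h1, ← Finset.compl_eq_univ_sdiff]
  · intro h
    exact absurd (Finset.mem_powerset.2 (Finset.subset_univ _)) h

lemma detP_support (A : Matrix (Fin n) (Fin n) k) {m : (Fin n × Fin n) →₀ ℕ}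
    (hm : m ∈ (detP A).support) : ∃ S p, m = mon S p := by
  classical
  have h := MvPolynomial.mem_support_iff.1 hm
  rw [coeff_detP] at h
  obtain ⟨σ, -, hσ⟩ := Finset.exists_ne_zero_of_sum_ne_zero h
  obtain ⟨t, -, ht⟩ := Finset.exists_ne_zero_of_sum_ne_zero hσ
  by_cases hc : mon (Finset.univ \ t) σ = m
  · exact ⟨_, σ, hc.symm⟩
  · rw [if_neg hc] at ht
    exact absurd rfl ht

lemma matrix_rank_add_le (M N : Matrix (Fin n) (Fin n) k) :
    (M + N).rank ≤ M.rank + N.rank := by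
  rw [Matrix.rank, Matrix.rank, Matrix.rank, Matrix.mulVecLin_add]
  have hle : LinearMap.range (M.mulVecLin + N.mulVecLin)
      ≤ LinearMap.range M.mulVecLin ⊔ LinearMap.range N.mulVecLin := by
    rintro x ⟨v, rfl⟩
    exact Submodule.mem_sup.2 ⟨M.mulVecLin v, ⟨v, rfl⟩, N.mulVecLin v, ⟨v, rfl⟩, rfl⟩
  exact (Submodule.finrank_mono hle).trans
    (Submodule.finrank_add_le_finrank_add_finrank _ _)

lemma rank_Bmat_le (A : Matrix (Fin n) (Fin n) k) (S : Finset (Fin n)) (p : Fin n → Fin n) :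
    (Bmat A S p).rank ≤ S.card + A.rank := by
  classical
  have hsplit : Bmat A S p
      = (Matrix.of fun i j => if i = p j then (1:k) else 0) * Matrix.diagonal (fun j => if j ∈ S then (1:k) else 0)
        + A * Matrix.diagonal (fun j => if j ∈ S then (0:k) else 1) := by
    ext i j
    by_cases hj : j ∈ S <;> simp [Bmat, Matrix.mul_diagonal, hj]
  rw [hsplit]
  refine (matrix_rank_add_le _ _).trans (add_le_add ?_ (Matrix.rank_mul_le_left _ _))
  refine (Matrix.rank_mul_le_right _ _).trans ?_
  rw [Matrix.rank_diagonal]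
  have : {i : Fin n // (if i ∈ S then (1:k) else 0) ≠ 0} ≃ {i : Fin n // i ∈ S} := by
    apply Equiv.subtypeEquivRight
    intro i
    by_cases hi : i ∈ S <;> simp [hi]
  rw [Fintype.card_congr this, Fintype.card_coe]

lemma lower (A : Matrix (Fin n) (Fin n) k) {m : (Fin n × Fin n) →₀ ℕ}
    (hm : m ∈ (detP A).support) : n - A.rank ≤ m.sum fun _ e => e := by
  classical
  obtain ⟨S, p, rfl⟩ := detP_support A hm
  rw [mon_deg]
  have hdet : (Bmat A S p).det ≠ 0 := by
    rw [← coeff_mon_detP]; exact MvPolynomial.mem_support_iff.1 hm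
  have hrank : (Bmat A S p).rank = n := by
    rw [Matrix.rank_of_isUnit _ ((Matrix.isUnit_iff_isUnit_det _).2 (isUnit_iff_ne_zero.2 hdet))]
    exact Fintype.card_fin n
  have h1 := rank_Bmat_le A S p
  omega

lemma isUnit_of_rank_eq (A : Matrix (Fin n) (Fin n) k) (h : A.rank = n) : IsUnit A := by
  rw [← Matrix.linearIndependent_cols_iff_isUnit]
  apply linearIndependent_iff_card_eq_finrank_span.2
  rw [Set.finrank, ← Matrix.rank_eq_finrank_span_cols, h, Fintype.card_fin]

lemma key_step (A : Matrix (Fin n) (Fin n) k) (h : A.rank < n) :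
    ∃ (j c : Fin n), A.rank + 1 ≤ (Bmat A {j} (fun _ => c)).rank := by
  classical
  have hrank : A.rank = Module.finrank k (Submodule.span k (Set.range Aᵀ)) :=
    Matrix.rank_eq_finrank_span_cols A
  have hne : Submodule.span k (Set.range Aᵀ) ≠ ⊤ := by
    intro htop
    rw [htop, finrank_top, Module.finrank_pi, Fintype.card_fin] at hrank
    omega
  have hec : ∃ c : Fin n, (Pi.single c 1 : Fin n → k) ∉ Submodule.span k (Set.range Aᵀ) := by
    by_contra hall
    push_neg at hall
    apply hne
    rw [eq_top_iff]
    intro v _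
    have hv : v = ∑ c : Fin n, v c • (Pi.single c 1 : Fin n → k) := by
      ext x
      simp [Pi.single_apply, Finset.sum_apply, eq_comm]
    rw [hv]
    exact Submodule.sum_mem _ fun c _ => Submodule.smul_mem _ _ (hall c)
  obtain ⟨c, hc⟩ := hec
  have hdep : ¬ LinearIndependent k (fun j => Aᵀ j) := by
    intro hind
    have hcard := linearIndependent_iff_card_eq_finrank_span.1 hind
    rw [Fintype.card_fin, Set.finrank] at hcard
    have : Set.range (fun j => Aᵀ j) = Set.range Aᵀ := rfl
    rw [this] at hcard
    omega
  obtain ⟨g, hsum, j, hgj⟩ := Fintype.not_linearIndependent_iff.1 hdep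
  refine ⟨j, c, ?_⟩
  set B := Bmat A {j} (fun _ => c) with hB
  have hncol_eq : ∀ i, i ≠ j → Bᵀ i = Aᵀ i := by
    intro i hij
    ext x
    simp [Bmat, B, Matrix.transpose_apply, hij]
  have hncol_j : Bᵀ j = Pi.single c 1 := by
    ext x
    simp [Bmat, B, Matrix.transpose_apply, Pi.single_apply]
  have hspan : Submodule.span k (Set.range Aᵀ) ≤ Submodule.span k (Set.range Bᵀ) := by
    rw [Submodule.span_le]
    rintro x ⟨i, rfl⟩
    by_cases hij : i = j
    · subst hij
      have hjrel : g i • Aᵀ i = - ∑ x ∈ Finset.univ.erase i, g x • Aᵀ x := by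
        rw [eq_neg_iff_add_eq_zero]
        exact (Finset.add_sum_erase Finset.univ (fun x => g x • Aᵀ x)
          (Finset.mem_univ i)).trans hsum
      have hAi : Aᵀ i = (g i)⁻¹ • (- ∑ x ∈ Finset.univ.erase i, g x • Aᵀ x) := by
        rw [← hjrel, smul_smul, inv_mul_cancel₀ hgj, one_smul]
      rw [hAi]
      refine Submodule.smul_mem _ _ (Submodule.neg_mem _ (Submodule.sum_mem _ ?_))
      intro x hx
      refine Submodule.smul_mem _ _ ?_
      rw [← hncol_eq x (Finset.ne_of_mem_erase hx)]
      exact Submodule.subset_span ⟨x, rfl⟩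
    · rw [← hncol_eq i hij]
      exact Submodule.subset_span ⟨i, rfl⟩
  have hlt : Submodule.span k (Set.range Aᵀ) < Submodule.span k (Set.range Bᵀ) := by
    refine lt_of_le_of_ne hspan ?_
    intro hEq
    apply hc
    rw [hEq, ← hncol_j]
    exact Submodule.subset_span ⟨j, rfl⟩
  have hrankB : B.rank = Module.finrank k (Submodule.span k (Set.range Bᵀ)) :=
    Matrix.rank_eq_finrank_span_cols B
  have hfin := Submodule.finrank_lt_finrank_of_lt hlt
  omega

lemma upper_aux : ∀ d : ℕ, ∀ A : Matrix (Fin n) (Fin n) k, n - A.rank ≤ d →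
    ∃ S p, S.card + A.rank ≤ n ∧ IsUnit (Bmat A S p) := by
  intro d
  induction d with
  | zero =>
    intro A hA
    have hrle : A.rank ≤ n := by simpa using A.rank_le_card_width
    have hr : A.rank = n := by omega
    refine ⟨∅, id, by simp [hr], ?_⟩
    have hBA : Bmat A ∅ id = A := by ext i j; simp [Bmat]
    rw [hBA]
    exact isUnit_of_rank_eq A hr
  | succ d ih =>
    intro A hA
    by_cases hr : n ≤ A.rank
    · have hrle : A.rank ≤ n := by simpa using A.rank_le_card_width
      have hr' : A.rank = n := le_antisymm hrle hr
      refine ⟨∅, id, by simp [hr'], ?_⟩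
      have hBA : Bmat A ∅ id = A := by ext i j; simp [Bmat]
      rw [hBA]
      exact isUnit_of_rank_eq A hr'
    · obtain ⟨j, c, hjc⟩ := key_step A (lt_of_not_ge hr)
      have hrleB : (Bmat A {j} fun _ => c).rank ≤ n := by
        simpa using (Bmat A {j} fun _ => c).rank_le_card_width
      obtain ⟨S', p', hcard, hunit⟩ := ih (Bmat A {j} fun _ => c) (by omega)
      classical
      refine ⟨insert j S', (fun i => if i ∈ S' then p' i else c), ?_, ?_⟩
      · have hcins := Finset.card_insert_le j S'
        omega
      · have hEq : Bmat A (insert j S') (fun i => if i ∈ S' then p' i else c)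
            = Bmat (Bmat A {j} fun _ => c) S' p' := by
          ext a b
          by_cases hb : b ∈ S'
          · simp [Bmat, hb]
          · by_cases hbj : b = j
            · subst hbj
              simp [Bmat, hb]
            · simp [Bmat, hb, hbj]
        rw [hEq]
        exact hunit

end Aux

theorem ord_det_eq (k : Type*) [Field k] (n : ℕ) (hn : 1 ≤ n)
    (A : Matrix (Fin n) (Fin n) k) :
    ord (Matrix.det fun i j : Fin n =>
        (MvPolynomial.C (A i j) + MvPolynomial.X (i, j) :
          MvPolynomial (Fin n × Fin n) k))
      = n - A.rank := by
  classical
  obtain ⟨S, p, hcard, hunit⟩ := upper_aux (n - A.rank) A le_rfl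
  have hdet0 : coeff (mon S p) (detP A) ≠ 0 := by
    rw [coeff_mon_detP]
    exact ((Matrix.isUnit_iff_isUnit_det _).1 hunit).ne_zero
  have hmem : mon S p ∈ (detP A).support := MvPolynomial.mem_support_iff.2 hdet0
  have hrle : A.rank ≤ n := by simpa using A.rank_le_card_width
  show ord (detP A) = n - A.rank
  have hmem' : (mon S p : (Fin n × Fin n) →₀ ℕ)
      ∈ ((detP A).support : Set ((Fin n × Fin n) →₀ ℕ)) := hmem
  have hSc : S.card ∈ (fun s : (Fin n × Fin n) →₀ ℕ => s.sum fun _ e => e) ''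
      ((detP A).support : Set ((Fin n × Fin n) →₀ ℕ)) := ⟨mon S p, hmem', mon_deg S p⟩
  apply le_antisymm
  · exact le_trans (Nat.sInf_le hSc) (by omega)
  · refine le_csInf ⟨S.card, hSc⟩ ?_
    rintro b ⟨m, hm, rfl⟩
    exact lower A hm

end Stmt11
end

section
/- Let m ≥ 2 and N = 2m+1. In the symmetric group S_N define s_i = (i, i+1)(N−i, N+1−i) for 1 ≤ i ≤ m−1, and s_m = (m, m+2). For 1 ≤ d ≤ 2m−1 let w_d = s_1 ∘ s_2 ∘ ⋯ ∘ s_d if d ≤ m, and w_d = s_1 ∘ ⋯ ∘ s_{m−1} ∘ s_m ∘ s_{m−1} ∘ ⋯ ∘ s_{2m−d} if d > m (composition of functions). Then w_d⁻¹(1) = d+1 for 1 ≤ d ≤ m−1, and w_d⁻¹(1) = d+2 for m ≤ d ≤ 2m−1. In particular, 2 ≤ w_d⁻¹(1) ≤ 2m for 1 ≤ d ≤ 2m−2, while w_{2m−1}⁻¹(1) = N = 2m+1. -/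
/- STATEMENT 15: computation of `w_d⁻¹(1)` for the minimal-length coset
   representatives of the Weyl group of SO(2m+1), realized inside the symmetric
   group on `{1, …, N}`, `N = 2m+1`.  We work with permutations of ℕ (fixing
   everything outside `{1, …, N}`), so that the 1-based indexing of the paper is
   kept verbatim. -/

namespace Stmt15

/-- The simple reflections: `s_i = (i, i+1)(N−i, N+1−i)` for `1 ≤ i ≤ m−1`
and `s_m = (m, m+2)`, where `N = 2m+1`. -/
def s (m i : ℕ) : Equiv.Perm ℕ :=
  if i = m then Equiv.swap m (m + 2)
  else Equiv.swap i (i + 1) * Equiv.swap (2 * m + 1 - i) (2 * m + 2 - i)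

/-- `w_d = s_1 ∘ ⋯ ∘ s_d` for `d ≤ m`, and
`w_d = s_1 ∘ ⋯ ∘ s_{m−1} ∘ s_m ∘ s_{m−1} ∘ ⋯ ∘ s_{2m−d}` for `d > m`. -/
def w (m d : ℕ) : Equiv.Perm ℕ :=
  if d ≤ m then ((List.range' 1 d).map (s m)).prod
  else (((List.range' 1 m).map (s m)) ++
        ((List.range' (2 * m - d) (d - m)).reverse.map (s m))).prod

lemma s_inv_mid (m i : ℕ) (h1 : 1 ≤ i) (h2 : i + 1 ≤ m) :
    (s m i)⁻¹ i = i + 1 := by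
  have hne : i ≠ m := by omega
  simp only [s, if_neg hne, mul_inv_rev, Equiv.Perm.mul_apply, Equiv.swap_inv]
  rw [Equiv.swap_apply_left]
  exact Equiv.swap_apply_of_ne_of_ne (by omega) (by omega)

lemma s_inv_big (m i : ℕ) (h1 : 1 ≤ i) (h2 : i + 1 ≤ m) :
    (s m i)⁻¹ (2 * m + 1 - i) = 2 * m + 2 - i := by
  have hne : i ≠ m := by omega
  simp only [s, if_neg hne, mul_inv_rev, Equiv.Perm.mul_apply, Equiv.swap_inv]
  rw [Equiv.swap_apply_of_ne_of_ne (a := i) (b := i + 1) (by omega) (by omega),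
    Equiv.swap_apply_left]

lemma s_inv_m (m : ℕ) : (s m m)⁻¹ m = m + 2 := by
  simp [s, Equiv.swap_inv, Equiv.swap_apply_left]

lemma w_succ_le (m d : ℕ) (h : d + 1 ≤ m) :
    w m (d + 1) = w m d * s m (d + 1) := by
  simp only [w, if_pos h, if_pos (by omega : d ≤ m), List.range'_1_concat,
    List.map_append, List.prod_append, List.map_cons, List.map_nil,
    List.prod_cons, List.prod_nil, mul_one, Nat.add_comm 1 d]

lemma w_phase2 (m d : ℕ) (h : m ≤ d) :
    w m d = (((List.range' 1 m).map (s m)) ++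
        ((List.range' (2 * m - d) (d - m)).reverse.map (s m))).prod := by
  by_cases hd : d ≤ m
  · have : d = m := le_antisymm hd h
    subst this
    simp [w]
  · simp [w, if_neg hd]

lemma w_succ_ge (m d : ℕ) (h1 : m ≤ d) (h2 : d ≤ 2 * m - 2) (hm : 2 ≤ m) :
    w m (d + 1) = w m d * s m (2 * m - d - 1) := by
  rw [w_phase2 m d h1, w_phase2 m (d + 1) (by omega)]
  have e1 : d + 1 - m = (d - m) + 1 := by omega
  have e2 : 2 * m - (d + 1) = 2 * m - d - 1 := by omega
  have e3 : (2 * m - d - 1) + 1 = 2 * m - d := by omega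
  rw [e1, e2, List.range'_succ, e3, List.reverse_cons, List.map_append]
  simp [List.prod_append, mul_assoc]

lemma main_calc (m : ℕ) (hm : 2 ≤ m) :
    ∀ d, 1 ≤ d → d ≤ 2 * m - 1 →
      (w m d)⁻¹ 1 = if d ≤ m - 1 then d + 1 else d + 2 := by
  intro d
  induction d with
  | zero => omega
  | succ d ih =>
    intro _ hd2
    rcases Nat.eq_zero_or_pos d with h0 | h1
    · subst h0
      have : w m 1 = s m 1 := by simp [w, (by omega : 1 ≤ m), List.range'_succ]
      rw [this, s_inv_mid m 1 le_rfl (by omega), if_pos (by omega)]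
    · have ihv := ih h1 (by omega)
      by_cases hle : d + 1 ≤ m
      · -- phase 1 step
        rw [w_succ_le m d hle, mul_inv_rev, Equiv.Perm.mul_apply, ihv,
          if_pos (by omega : d ≤ m - 1)]
        by_cases hlt : d + 1 ≤ m - 1
        · rw [if_pos hlt]
          exact s_inv_mid m (d + 1) (by omega) (by omega)
        · have hdm : d + 1 = m := by omega
          rw [if_neg hlt, hdm]
          rw [s_inv_m]
      · -- phase 2 step
        have hmd : m ≤ d := by omega
        rw [w_succ_ge m d hmd (by omega) hm, mul_inv_rev, Equiv.Perm.mul_apply,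
          ihv, if_neg (by omega : ¬ d ≤ m - 1), if_neg (by omega : ¬ d + 1 ≤ m - 1)]
        have e : d + 2 = 2 * m + 1 - (2 * m - d - 1) := by omega
        rw [e, s_inv_big m (2 * m - d - 1) (by omega) (by omega)]
        omega

theorem w_inv_one (m : ℕ) (hm : 2 ≤ m) :
    (∀ d, 1 ≤ d → d ≤ m - 1 → (w m d)⁻¹ 1 = d + 1) ∧
    (∀ d, m ≤ d → d ≤ 2 * m - 1 → (w m d)⁻¹ 1 = d + 2) ∧
    (∀ d, 1 ≤ d → d ≤ 2 * m - 2 → 2 ≤ (w m d)⁻¹ 1 ∧ (w m d)⁻¹ 1 ≤ 2 * m) ∧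
    (w m (2 * m - 1))⁻¹ 1 = 2 * m + 1 := by
  have key := main_calc m hm
  refine ⟨?_, ?_, ?_, ?_⟩
  · intro d h1 h2
    rw [key d h1 (by omega), if_pos h2]
  · intro d h1 h2
    rw [key d (by omega) h2, if_neg (by omega)]
  · intro d h1 h2
    rw [key d h1 (by omega)]
    split <;> omega
  · rw [key (2 * m - 1) (by omega) le_rfl, if_neg (by omega)]
    omega

end Stmt15
end
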